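/- Let P ∈ ℤ[X] be a non-constant polynomial with leading coefficient ±1, and let a, b be coprime positive integers such that (a/b)^{P(a/b)} is rational. Then b = 1. -/

import Mathlib

theorem stmt_12 (P : Polynomial ℤ) (hP : 0 < P.natDegree) (hA : |P.leadingCoeff| = 1)
    (a b : ℕ) (ha : 0 < a) (hb : 0 < b) (hab : Nat.Coprime a b)
    (h : ∃ q : ℚ, ((a : ℝ) / b) ^ ((Polynomial.aeval ((a : ℚ) / b) P : ℚ) : ℝ) = q) :
    b = 1 := by
  by_contra hb1
  obtain ⟨q, hq⟩ := h
  set d := P.natDegree with hd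
  set t : ℚ := Polynomial.aeval ((a:ℚ)/b) P with ht
  set r : ℚ := (a:ℚ)/(b:ℚ) with hr
  have hbQ : (b:ℚ) ≠ 0 := Nat.cast_ne_zero.mpr hb.ne'
  have haQ : (a:ℚ) ≠ 0 := Nat.cast_ne_zero.mpr ha.ne'
  set N : ℤ := ∑ i ∈ Finset.range (d+1), P.coeff i * (a:ℤ)^i * (b:ℤ)^(d-i) with hN
  -- N = b^d * t
  have htN : (N : ℚ) = (b:ℚ)^d * t := by
    rw [ht, Polynomial.aeval_eq_sum_range, Finset.mul_sum, hN]
    push_cast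
    refine Finset.sum_congr rfl (fun i hi => ?_)
    have hi' : i ≤ d := Nat.lt_succ_iff.mp (Finset.mem_range.mp hi)
    have hpow : (b:ℚ)^(d-i) * (b:ℚ)^i = (b:ℚ)^d := pow_sub_mul_pow _ hi'
    rw [zsmul_eq_mul, div_pow]
    push_cast
    field_simp
    linear_combination (P.coeff i : ℚ) * hpow
  -- coprimality of N and b
  have hcop : IsCoprime N (b:ℤ) := by
    have hsplit : N = (b:ℤ) * (∑ i ∈ Finset.range d, P.coeff i * (a:ℤ)^i * (b:ℤ)^(d-i-1))
        + P.leadingCoeff * (a:ℤ)^d := by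
      rw [hN, Finset.sum_range_succ, Finset.mul_sum, Nat.sub_self, pow_zero, mul_one,
        Polynomial.leadingCoeff]
      congr 1
      refine Finset.sum_congr rfl (fun i hi => ?_)
      have hi' : i < d := Finset.mem_range.mp hi
      have : (b:ℤ)^(d-i) = (b:ℤ) * (b:ℤ)^(d-i-1) := by
        rw [← pow_succ']
        congr 1
        omega
      rw [this]; ring
    have hlc : IsCoprime P.leadingCoeff (b:ℤ) := by
      rcases (abs_eq (by norm_num : (0:ℤ) ≤ 1)).mp hA with h1 | h1 <;>
        exact ⟨P.leadingCoeff, 0, by rw [h1]; ring⟩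
    have hac : IsCoprime ((a:ℤ)^d) (b:ℤ) :=
      (Nat.isCoprime_iff_coprime.mpr hab).pow_left
    have : IsCoprime (P.leadingCoeff * (a:ℤ)^d) (b:ℤ) := hlc.mul_left hac
    rw [hsplit, add_comm]
    exact this.add_mul_left_left _
  -- real analytic step: q ^ (b^d) = r ^ N
  have hx : (0:ℝ) < (a:ℝ)/b := by positivity
  have key : q ^ (b^d) = r ^ (N:ℤ) := by
    have hxr : ((r:ℚ):ℝ) = (a:ℝ)/b := by rw [hr]; push_cast; ring
    have : ((q ^ (b^d) : ℚ) : ℝ) = ((r ^ (N:ℤ) : ℚ) : ℝ) := by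
      rw [Rat.cast_pow, Rat.cast_zpow, hxr, ← hq, ← Real.rpow_natCast _ (b^d),
        ← Real.rpow_mul hx.le, ← Real.rpow_intCast]
      congr 1
      have h' := congrArg (fun x : ℚ => (x:ℝ)) htN
      push_cast at h' ⊢
      linarith
    exact_mod_cast this
  -- translate to natural exponents
  set M : ℕ := N.natAbs with hM
  obtain ⟨s, hs⟩ : ∃ s : ℚ, s ^ (b^d) = r ^ M := by
    rcases le_or_gt 0 N with hN0 | hN0
    · refine ⟨q, ?_⟩
      rw [key, ← zpow_natCast]
      congr 1
      omega
    · refine ⟨q⁻¹, ?_⟩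
      rw [inv_pow, key]
      rw [show (N:ℤ) = -(M:ℤ) by omega, zpow_neg, inv_inv, zpow_natCast]
  -- denominators
  have hrden : r.den = b := by
    have := Rat.den_div_eq_of_coprime (a := (a:ℤ)) (b := (b:ℤ))
      (by exact_mod_cast hb) (by simpa using hab)
    have h2 : ((a:ℤ):ℚ)/((b:ℤ):ℚ) = r := by push_cast; rw [hr]
    rw [h2] at this
    exact_mod_cast this
  have hden : s.den ^ (b^d) = b ^ M := by
    have := congrArg Rat.den hs
    rwa [Rat.den_pow, Rat.den_pow, hrden] at this
  -- valuation at a prime dividing b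
  obtain ⟨p, hp, hpb⟩ := Nat.exists_prime_and_dvd hb1
  have hfac := congrArg (fun n => n.factorization p) hden
  simp only [Nat.factorization_pow, Finsupp.smul_apply, smul_eq_mul] at hfac
  set f := b.factorization p with hf
  have hdvd : b^d ∣ M * f := ⟨s.den.factorization p, hfac.symm⟩
  have hMb : Nat.Coprime M b := by
    have := Int.isCoprime_iff_gcd_eq_one.mp hcop
    simpa [Int.gcd, hM] using this
  have hdvdf : b^d ∣ f := (Nat.Coprime.pow_left d hMb.symm).dvd_of_dvd_mul_left hdvd
  have hfpos : 0 < f := hp.factorization_pos_of_dvd hb.ne' hpb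
  have hflt : f < b ^ d := lt_of_lt_of_le (Nat.factorization_lt p hb.ne')
    (Nat.le_self_pow hP.ne' b)
  exact absurd (Nat.le_of_dvd hfpos hdvdf) (not_le.mpr hflt)
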